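/- Let X and Y be topological spaces, let F ⊆ G be closed correspondences from X to Y, let G be homologically consistent, and let f : X → Y be a continuous selector of G. If F is homologically complete, then for every n ≥ 0: H_n(p_F) : H_n(F) → H_n(X) is surjective and for every a ∈ H_n(F) one has H_n(f)(H_n(p_F)(a)) = H_n(q_F)(a); consequently the homomorphism H_n(f) induced by f is completely determined by the projections of F alone. -/

import Mathlib

open CategoryTheory AlgebraicTopology

/-- Degree-`n` singular homology with coefficients in a commutative ring `R`,
as a functor from topological spaces to `R`-modules: the homology of the
alternating face map complex of the free simplicial `R`-module on the singular
simplicial set. -/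
noncomputable def Hn (R : Type) [CommRing R] (n : ℕ) :
    TopCat.{0} ⥤ ModuleCat.{0} R :=
  TopCat.toSSet ⋙ ((SimplicialObject.whiskering _ _).obj (ModuleCat.free R)) ⋙
    alternatingFaceMapComplex (ModuleCat R) ⋙
    HomologicalComplex.homologyFunctor (ModuleCat R) (ComplexShape.down ℕ) n

/-- A correspondence `F ⊆ X × Y` with the subspace topology, as an object of `TopCat`. -/
def corr {X Y : Type} [TopologicalSpace X] [TopologicalSpace Y]
    (F : Set (X × Y)) : TopCat.{0} := TopCat.of F

/-- The first-coordinate projection `p_F : F → X` of a correspondence `F ⊆ X × Y`. -/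
def projX {X Y : Type} [TopologicalSpace X] [TopologicalSpace Y]
    (F : Set (X × Y)) : corr F ⟶ TopCat.of X :=
  TopCat.ofHom ⟨fun z => z.1.1, continuous_fst.comp continuous_subtype_val⟩

/-- The second-coordinate projection `q_F : F → Y` of a correspondence `F ⊆ X × Y`. -/
def projY {X Y : Type} [TopologicalSpace X] [TopologicalSpace Y]
    (F : Set (X × Y)) : corr F ⟶ TopCat.of Y :=
  TopCat.ofHom ⟨fun z => z.1.2, continuous_snd.comp continuous_subtype_val⟩

/-- **Theorem `thm:combinedtheorem` of the paper**: let `F ⊆ G` be closed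
correspondences from `X` to `Y`, let `G` be homologically consistent, and let
`f : X → Y` be a continuous selector of `G`.  If `F` is homologically complete, then
for every `n` the map `H_n(p_F)` is surjective and
`H_n(f)(H_n(p_F)(a)) = H_n(q_F)(a)` for every `a ∈ H_n(F)`; hence `H_n(f)` is
completely determined by the projections of `F` alone. -/
theorem induced_map_from_complete_subcorrespondence
    {X Y : Type} [TopologicalSpace X] [TopologicalSpace Y]
    (R : Type) [CommRing R]
    (F G : Set (X × Y)) (hFG : F ⊆ G)
    (hFclosed : IsClosed F) (hGclosed : IsClosed G)
    (hGconsistent : ∀ n : ℕ,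
      LinearMap.ker ((Hn R n).map (projX G)).hom ≤ LinearMap.ker ((Hn R n).map (projY G)).hom)
    (f : X → Y) (hf : Continuous f) (hsel : ∀ x : X, (x, f x) ∈ G)
    (hFcomplete : ∀ n : ℕ, Function.Surjective ((Hn R n).map (projX F))) :
    ∀ n : ℕ,
      Function.Surjective ((Hn R n).map (projX F)) ∧
      ∀ a : (Hn R n).obj (corr F),
        (Hn R n).map (TopCat.ofHom ⟨f, hf⟩ : TopCat.of X ⟶ TopCat.of Y) ((Hn R n).map (projX F) a) =
          (Hn R n).map (projY F) a := by
  intro n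
  refine ⟨hFcomplete n, fun a => ?_⟩
  -- inclusion F ⟶ G
  let ι : corr F ⟶ corr G :=
    TopCat.ofHom ⟨fun z => ⟨z.1, hFG z.2⟩, Continuous.subtype_mk continuous_subtype_val _⟩
  -- graph map X ⟶ G
  let g : TopCat.of X ⟶ corr G :=
    TopCat.ofHom ⟨fun x => ⟨(x, f x), hsel x⟩,
      Continuous.subtype_mk (continuous_id.prodMk hf) _⟩
  have comp_app : ∀ {A B C : TopCat.{0}} (φ : A ⟶ B) (ψ : B ⟶ C) (x : (Hn R n).obj A),
      (Hn R n).map ψ ((Hn R n).map φ x) = (Hn R n).map (φ ≫ ψ) x := by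
    intro A B C φ ψ x
    rw [Functor.map_comp]
    rfl
  have h1 : projX F ≫ g ≫ projX G = ι ≫ projX G := rfl
  have h2 : projX F ≫ g ≫ projY G =
      projX F ≫ (TopCat.ofHom ⟨f, hf⟩ : TopCat.of X ⟶ TopCat.of Y) := rfl
  have h3 : ι ≫ projY G = projY F := rfl
  have hker : (Hn R n).map g ((Hn R n).map (projX F) a) - (Hn R n).map ι a ∈
      LinearMap.ker ((Hn R n).map (projX G)).hom := by
    rw [LinearMap.mem_ker, map_sub]
    simp only [comp_app, Category.assoc]
    rw [h1, sub_self]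
  have hY := hGconsistent n hker
  rw [LinearMap.mem_ker, map_sub, sub_eq_zero] at hY
  simp only [comp_app, Category.assoc] at hY
  rw [h2, h3] at hY
  rw [comp_app]
  exact hY
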